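/- arXiv:1502.07202 — 3 statements merged into one kernel-verified Lean document; each statement's English description precedes it below -/
import Mathlib

section
/- Let G be a finite group generated by h, v with commutator c of order N, and let S be the associated regular origami. For every complex irreducible representation π of G, the multiplicity of π in H¹(S; ℂ) equals 2·δ_{π=triv} + dim π − m₀, where m₀ is the dimension of the subspace of π fixed by c and δ_{π=triv} = 1 if π is trivial and 0 otherwise. -/
open scoped BigOperators

open CategoryTheory Module in
private lemma aux_triv_char {G : Type} [Group G] (π : FDRep ℂ G) (hπ : Simple π)
    (x : π.V) (hx : x ≠ 0) (hinv : ∀ g : G, π.ρ g x = x) : ∀ g : G, π.character g = 1 := by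
  haveI := hπ
  let L : FDRep ℂ G := FDRep.of (1 : Representation ℂ G ℂ)
  let ι : L ⟶ π := ⟨InducedCategory.homMk (ModuleCat.ofHom (LinearMap.toSpanSingleton ℂ π.V x)), by
    intro g
    apply FGModuleCat.hom_ext
    apply LinearMap.ext
    intro a
    show LinearMap.toSpanSingleton ℂ π.V x (((1 : Representation ℂ G ℂ) g) a)
        = π.ρ g (LinearMap.toSpanSingleton ℂ π.V x a)
    show LinearMap.toSpanSingleton ℂ π.V x a = π.ρ g (LinearMap.toSpanSingleton ℂ π.V x a)
    rw [LinearMap.toSpanSingleton_apply, map_smul, hinv g]⟩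
  have hmono : Mono ι := by
    constructor
    intro Z g₁ g₂ hgg
    ext z
    have h2 := congrArg (fun f => f.hom z) hgg
    simp only [Action.comp_hom] at h2
    have h3 : LinearMap.toSpanSingleton ℂ π.V x (g₁.hom z)
        = LinearMap.toSpanSingleton ℂ π.V x (g₂.hom z) := by
      simp only [CategoryTheory.comp_apply] at h2; exact h2
    simp only [LinearMap.toSpanSingleton_apply] at h3
    exact smul_left_injective ℂ hx h3
  have hne : ι ≠ 0 := by
    intro h0
    have h1 : LinearMap.toSpanSingleton ℂ π.V x = (0 : L ⟶ π).hom.hom.hom :=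
      congrArg (fun f => f.hom.hom.hom) h0
    rw [Action.zero_hom] at h1
    have h2 := DFunLike.congr_fun h1 (1 : ℂ)
    rw [LinearMap.toSpanSingleton_apply_one] at h2
    exact hx (by simpa using h2)
  have : IsIso ι := (Simple.mono_isIso_iff_nonzero ι).mpr hne
  have hiso : L ≅ π := asIso ι
  intro g
  rw [← FDRep.char_iso hiso]
  show (FDRep.of (1 : Representation ℂ G ℂ)).character g = 1
  unfold FDRep.character
  rw [show (FDRep.of (1 : Representation ℂ G ℂ)).ρ = (1 : Representation ℂ G ℂ) from
    FDRep.of_ρ' _]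
  show LinearMap.trace ℂ ℂ (1 : ℂ →ₗ[ℂ] ℂ) = 1
  rw [LinearMap.trace_one]
  norm_num

open CategoryTheory Module in
private lemma aux_sum_char {G : Type} [Group G] [Fintype G] (π : FDRep ℂ G) (hπ : Simple π) :
    ∑ g : G, π.character g
      = (Fintype.card G : ℂ) * (if ∀ g : G, π.character g = 1 then 1 else 0) := by
  classical
  by_cases hT : ∀ g : G, π.character g = 1
  · simp [hT, Finset.sum_const]
  · rw [if_neg hT, mul_zero]
    haveI : Invertible (Fintype.card G : ℂ) :=
      invertibleOfNonzero (Nat.cast_ne_zero.mpr Fintype.card_ne_zero)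
    have havg := FDRep.average_char_eq_finrank_invariants π
    have hbot : Representation.invariants (k := ℂ) (G := G) (V := π.V) π.ρ = ⊥ := by
      rw [Submodule.eq_bot_iff]
      intro x hxmem
      by_contra hx
      exact hT (aux_triv_char π hπ x hx ((Representation.mem_invariants _ _).mp hxmem))
    rw [hbot] at havg
    simp only [finrank_bot, Nat.cast_zero] at havg
    have := congrArg (fun z => (Fintype.card G : ℂ) * z) havg
    simpa only [smul_eq_mul, Nat.card_eq_fintype_card, ← mul_assoc,
      mul_inv_cancel₀ (a := (Fintype.card G : ℂ)) (Nat.cast_ne_zero.mpr Fintype.card_ne_zero),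
      one_mul, mul_zero] using this

open CategoryTheory Module in
private lemma aux_sum_zpowers {G : Type} [Group G] [Fintype G] (c : G) (π : FDRep ℂ G) :
    ∑ t : (Subgroup.zpowers c), π.character ↑t
      = (orderOf c : ℂ) * (finrank ℂ (Module.End.eigenspace (π.ρ c) 1) : ℂ) := by
  classical
  set H := Subgroup.zpowers c with hH
  have hcard : Fintype.card H = orderOf c := Fintype.card_zpowers
  haveI : Invertible (Fintype.card H : ℂ) :=
    invertibleOfNonzero (Nat.cast_ne_zero.mpr Fintype.card_ne_zero)
  set ρH : Representation ℂ H π.V := π.ρ.comp H.subtype with hρH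
  have havg := FDRep.average_char_eq_finrank_invariants (FDRep.of ρH)
  have hofρ : (FDRep.of ρH).ρ = ρH := FDRep.of_ρ' _
  have hchar : ∀ t : H, (FDRep.of ρH).character t = π.character ↑t := fun t => rfl
  have hsub : ρH.invariants = Module.End.eigenspace (π.ρ c) 1 := by
    ext x
    rw [Representation.mem_invariants, Module.End.mem_eigenspace_iff, one_smul]
    constructor
    · intro hall
      exact hall ⟨c, Subgroup.mem_zpowers c⟩
    · intro hx t
      obtain ⟨n, hn⟩ := (isOfFinOrder_of_finite c).mem_powers_iff_mem_zpowers.mpr t.2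
      show π.ρ ↑t x = x
      rw [← hn, map_pow, Module.End.pow_apply]
      exact Function.iterate_fixed hx n
  rw [hofρ, hsub] at havg
  simp only [hchar] at havg
  have := congrArg (fun z => (Fintype.card H : ℂ) * z) havg
  simp only [smul_eq_mul, Nat.card_eq_fintype_card, ← mul_assoc,
    mul_inv_cancel₀ (a := (Fintype.card H : ℂ)) (Nat.cast_ne_zero.mpr Fintype.card_ne_zero),
    one_mul] at this
  rw [this, hcard]

open Classical in
/-- For the regular origami `S` determined by a finite group `G` with two generators `h, v`
and commutator `c = [h,v]` of order `N`, the character of the `G`-representation `H¹(S;ℂ)`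
is the class function `χ_{H¹} = 2 - Ind_{⟨c⟩}^G χ₀ + (|G|/N - 2 + 2·genus(S))·δ_id`
(hypothesis `hχ`, with `genus(S) = (|G| - |G|/N)/2 + 1`).  The multiplicity
`⟨χ_{H¹}, χ_π⟩_G` of any complex irreducible representation `π` of `G` in `H¹(S;ℂ)`
equals `2·δ_{π = triv} + dim π - m₀`, where `m₀` is the dimension of the subspace of `π`
fixed by `c`. -/
theorem stmt4 (G : Type) [Group G] [Fintype G] (h v : G)
    (hgen : Subgroup.closure ({h, v} : Set G) = ⊤)
    (c : G) (hc : c = h * v * h⁻¹ * v⁻¹) (N : ℕ) (hN : N = orderOf c)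
    (π : FDRep ℂ G) (hπ : CategoryTheory.Simple π)
    (χH1 : G → ℂ)
    (hχ : ∀ g : G,
      χH1 g = 2
        - (1 / (N : ℂ)) * ∑ s : G, (if s * g * s⁻¹ ∈ Subgroup.zpowers c then (1 : ℂ) else 0)
        + (if g = 1 then
            ((Fintype.card G : ℂ) / (N : ℂ) - 2
              + 2 * (((Fintype.card G : ℂ) - (Fintype.card G : ℂ) / (N : ℂ)) / 2 + 1))
          else 0)) :
    (1 / (Fintype.card G : ℂ)) * ∑ g : G, χH1 g * (starRingEnd ℂ) (π.character g)
      = 2 * (if ∀ g : G, π.character g = 1 then (1 : ℂ) else 0)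
        + (Module.finrank ℂ π.V : ℂ)
        - (Module.finrank ℂ (Module.End.eigenspace (π.ρ c) 1) : ℂ) := by
  classical
  set conj := starRingEnd ℂ
  set H := Subgroup.zpowers c with hH
  set T : ℂ := if ∀ g : G, π.character g = 1 then (1 : ℂ) else 0 with hT
  set d : ℂ := (Module.finrank ℂ π.V : ℂ) with hd
  set m : ℂ := (Module.finrank ℂ (Module.End.eigenspace (π.ρ c) 1) : ℂ) with hm
  set K : ℂ := ((Fintype.card G : ℂ) / (N : ℂ) - 2
      + 2 * (((Fintype.card G : ℂ) - (Fintype.card G : ℂ) / (N : ℂ)) / 2 + 1)) with hK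
  have hN0 : (N : ℂ) ≠ 0 := by
    rw [hN]
    exact_mod_cast (orderOf_pos c).ne'
  have hG0 : ((Fintype.card G : ℂ)) ≠ 0 := Nat.cast_ne_zero.mpr Fintype.card_ne_zero
  -- conj of T, d, m are themselves
  have hconjT : conj T = T := by
    rw [hT]
    split_ifs <;> simp [conj]
  -- sum of conjugated characters over G
  have hsum1 : ∑ g : G, conj (π.character g) = (Fintype.card G : ℂ) * T := by
    rw [← map_sum, aux_sum_char π hπ, map_mul, map_natCast, hconjT]
  -- sum over indicator of H times conjugated character
  have hsum2 : ∑ t : G, (if t ∈ H then (1 : ℂ) else 0) * conj (π.character t)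
      = (N : ℂ) * m := by
    have e1 : ∀ t : G, (if t ∈ H then (1 : ℂ) else 0) * conj (π.character t)
        = conj ((if t ∈ H then (1 : ℂ) else 0) * π.character t) := by
      intro t
      rw [map_mul]
      congr 1
      split_ifs <;> simp [conj]
    simp only [e1]
    rw [← map_sum]
    have e2 : ∑ t : G, (if t ∈ H then (1 : ℂ) else 0) * π.character t
        = ∑ t : H, π.character ↑t := by
      rw [← Finset.sum_subtype (Finset.univ.filter (· ∈ H))
        (by simp) (fun t => π.character t)]
      rw [Finset.sum_filter]
      simp [boole_mul]
    rw [e2, aux_sum_zpowers c π, ← hN, map_mul, map_natCast]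
    congr 1
    simp [hm, conj]
  -- conjugation-reindexing: inner sum over g for fixed s
  have hinner : ∀ s : G,
      ∑ g : G, (if s * g * s⁻¹ ∈ H then (1 : ℂ) else 0) * conj (π.character g)
        = (N : ℂ) * m := by
    intro s
    rw [← hsum2]
    refine Fintype.sum_equiv (MulAut.conj s).toEquiv
      (fun g => (if s * g * s⁻¹ ∈ H then (1 : ℂ) else 0) * conj (π.character g))
      (fun t => (if t ∈ H then (1 : ℂ) else 0) * conj (π.character t)) ?_
    intro x
    simp only [MulEquiv.toEquiv_eq_coe, EquivLike.coe_coe, MulAut.conj_apply]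
    rw [FDRep.char_conj π x s]
    congr 1
  -- the middle double sum
  have hmid : ∑ g : G,
      (∑ s : G, if s * g * s⁻¹ ∈ H then (1 : ℂ) else 0) * conj (π.character g)
        = (Fintype.card G : ℂ) * ((N : ℂ) * m) := by
    simp_rw [Finset.sum_mul]
    rw [Finset.sum_comm]
    rw [Finset.sum_congr rfl (fun s _ => hinner s)]
    rw [Finset.sum_const, Finset.card_univ, nsmul_eq_mul]
  -- the delta term
  have hchar1 : conj (π.character 1) = d := by
    rw [FDRep.char_one, map_natCast, hd]
  -- expand the summand
  have hexp : ∑ g : G, χH1 g * conj (π.character g)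
      = 2 * ∑ g : G, conj (π.character g)
        - (1 / (N : ℂ)) * ∑ g : G,
            (∑ s : G, if s * g * s⁻¹ ∈ H then (1 : ℂ) else 0) * conj (π.character g)
        + K * conj (π.character 1) := by
    rw [Finset.mul_sum, Finset.mul_sum]
    rw [show K * conj (π.character 1)
        = ∑ g : G, (if g = 1 then K * conj (π.character g) else 0) by
      rw [Finset.sum_ite_eq' Finset.univ (1 : G) (fun g => K * conj (π.character g))]
      simp]
    rw [← Finset.sum_sub_distrib, ← Finset.sum_add_distrib]
    refine Finset.sum_congr rfl (fun g _ => ?_)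
    rw [hχ g]
    by_cases hg : g = 1 <;> simp only [hg, if_true, if_false, hH] <;> ring
  have hKG : K = (Fintype.card G : ℂ) := by rw [hK]; ring
  rw [hexp, hsum1, hmid, hchar1, hKG]
  have e3 : (1 / (N : ℂ)) * ((Fintype.card G : ℂ) * ((N : ℂ) * m))
      = (Fintype.card G : ℂ) * m := by
    field_simp
  rw [e3]
  have e4 : 2 * ((Fintype.card G : ℂ) * T) - (Fintype.card G : ℂ) * m
      + (Fintype.card G : ℂ) * d = (Fintype.card G : ℂ) * (2 * T + d - m) := by ring
  rw [e4, one_div, inv_mul_cancel_left₀ hG0]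
end

section
/- Let N ≥ 1 and let m₀, ..., m_{N−1} be real numbers with Σ m_i = d. Then the limit as r → 1 (for real r with |r| < 1) of (Σ_{i=0}^{N−1} r^i m_i)/(1 − r^N) − (d/N)·1/(1 − r) exists and equals −(1/N)·Σ_{i=0}^{N−1} (i − (N−1)/2)·m_i. -/
open scoped BigOperators

/-- For `N ≥ 1` and reals `m₀, …, m_{N-1}` with `∑ m_i = d`, the limit as `r → 1`
(for real `r` with `|r| < 1`) of
`(∑_{i<N} r^i m_i)/(1 - r^N) - (d/N)·1/(1-r)` exists and equals
`-(1/N)·∑_{i<N} (i - (N-1)/2)·m_i`. -/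
theorem stmt6 (N : ℕ) (hN : 1 ≤ N) (m : ℕ → ℝ) (d : ℝ)
    (hd : ∑ i ∈ Finset.range N, m i = d) :
    Filter.Tendsto
      (fun r : ℝ =>
        (∑ i ∈ Finset.range N, r ^ i * m i) / (1 - r ^ N) - (d / N) * (1 / (1 - r)))
      (nhdsWithin 1 (Set.Ioo (-1 : ℝ) 1))
      (nhds (-(1 / N) * ∑ i ∈ Finset.range N, ((i : ℝ) - (N - 1) / 2) * m i)) := by
  have hN0 : (N : ℝ) ≠ 0 := Nat.cast_ne_zero.mpr (by omega)
  set g : ℝ → ℝ := fun r => ∑ i ∈ Finset.range N, ((N : ℝ) * m i - d) * r ^ i with hg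
  set S : ℝ → ℝ := fun r => ∑ i ∈ Finset.range N, r ^ i with hS
  have hg1 : g 1 = 0 := by
    simp [hg, Finset.sum_sub_distrib, ← Finset.mul_sum, hd, Finset.sum_const,
      Finset.card_range, nsmul_eq_mul]
  have hS1 : S 1 = N := by simp [hS]
  -- derivative of g at 1
  have hgd : HasDerivAt g (∑ i ∈ Finset.range N, ((N : ℝ) * m i - d) * i) 1 := by
    have : HasDerivAt g
        (∑ i ∈ Finset.range N, ((N : ℝ) * m i - d) * (i * (1:ℝ) ^ (i - 1))) 1 := by
      apply HasDerivAt.fun_sum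
      intro i _
      exact (hasDerivAt_pow i (1:ℝ)).const_mul _
    simpa using this
  have hslope : Filter.Tendsto (slope g 1) (nhdsWithin 1 {(1:ℝ)}ᶜ)
      (nhds (∑ i ∈ Finset.range N, ((N : ℝ) * m i - d) * i)) :=
    hasDerivAt_iff_tendsto_slope.mp hgd
  have hle : nhdsWithin (1:ℝ) (Set.Ioo (-1:ℝ) 1) ≤ nhdsWithin 1 {(1:ℝ)}ᶜ :=
    nhdsWithin_mono 1 (fun x hx => ne_of_lt hx.2)
  have hslope' := hslope.mono_left hle
  -- continuity of r ↦ -(1/(N * S r))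
  have hScont : Filter.Tendsto (fun r : ℝ => -(1 / ((N : ℝ) * S r)))
      (nhdsWithin 1 (Set.Ioo (-1:ℝ) 1)) (nhds (-(1 / ((N : ℝ) * N)))) := by
    have hc : Continuous S := by
      apply continuous_finset_sum
      intro i _
      exact continuous_pow i
    have : Filter.Tendsto S (nhds 1) (nhds (N : ℝ)) := by
      simpa [hS1] using hc.tendsto 1
    have h2 : Filter.Tendsto (fun r : ℝ => -(1 / ((N : ℝ) * S r))) (nhds 1)
        (nhds (-(1 / ((N : ℝ) * N)))) := by
      apply Filter.Tendsto.neg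
      apply Filter.Tendsto.div tendsto_const_nhds (this.const_mul _)
      positivity
    exact h2.mono_left nhdsWithin_le_nhds
  have hmul := hslope'.mul hScont
  -- eventual equality
  have hev : ∀ r ∈ Set.Ioo (-1:ℝ) 1,
      (∑ i ∈ Finset.range N, r ^ i * m i) / (1 - r ^ N) - (d / N) * (1 / (1 - r))
        = slope g 1 r * -(1 / ((N : ℝ) * S r)) := by
    intro r hr
    have hr1 : r ≠ 1 := ne_of_lt hr.2
    have habs : |r| < 1 := abs_lt.mpr ⟨hr.1, hr.2⟩
    have hrN : r ^ N < 1 := by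
      calc r ^ N ≤ |r ^ N| := le_abs_self _
        _ = |r| ^ N := abs_pow r N
        _ < 1 := pow_lt_one₀ (abs_nonneg r) habs (by omega)
    have hne : (1 : ℝ) - r ^ N ≠ 0 := by linarith
    have hfac : 1 - r ^ N = (1 - r) * S r := by
      have := geom_sum_mul r N
      simp only [hS]
      nlinarith [this]
    have hSne : S r ≠ 0 := by
      intro h
      rw [hfac, h, mul_zero] at hne
      exact hne rfl
    have hr1' : (1 : ℝ) - r ≠ 0 := sub_ne_zero.mpr (Ne.symm hr1)
    have hgr : g r = (N : ℝ) * (∑ i ∈ Finset.range N, r ^ i * m i) - d * S r := by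
      simp only [hg, hS, Finset.sum_sub_distrib, sub_mul, ← Finset.mul_sum]
      congr 1
      rw [Finset.mul_sum]
      exact Finset.sum_congr rfl fun i _ => by ring
    have hr1'' : r - 1 ≠ 0 := sub_ne_zero.mpr hr1
    rw [slope_def_field, hg1, hgr, hfac]
    field_simp
    ring
  have heq : (fun r : ℝ =>
        (∑ i ∈ Finset.range N, r ^ i * m i) / (1 - r ^ N) - (d / N) * (1 / (1 - r)))
      =ᶠ[nhdsWithin 1 (Set.Ioo (-1:ℝ) 1)]
      fun r => slope g 1 r * -(1 / ((N : ℝ) * S r)) :=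
    eventually_nhdsWithin_of_forall hev
  refine (Filter.Tendsto.congr' heq.symm ?_)
  convert hmul using 2
  -- value equality
  have hC : ∑ i ∈ Finset.range N, (i : ℝ) = N * (N - 1) / 2 := by
    have := Finset.sum_range_id_mul_two N
    have h2 : ((∑ i ∈ Finset.range N, i : ℕ) : ℝ) * 2 = (N : ℝ) * ((N : ℝ) - 1) := by
      have hcast : ((N - 1 : ℕ) : ℝ) = (N : ℝ) - 1 := by
        push_cast [Nat.cast_sub hN]; ring
      rw [← hcast]
      exact_mod_cast congrArg (Nat.cast : ℕ → ℝ) this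
    push_cast at h2 ⊢
    linarith
  have hexp : ∑ i ∈ Finset.range N, ((N : ℝ) * m i - d) * i
      = (N : ℝ) * (∑ i ∈ Finset.range N, (i : ℝ) * m i) - d * ((N : ℝ) * ((N : ℝ) - 1) / 2) := by
    rw [Finset.sum_congr rfl (fun i _ => by ring :
      ∀ i ∈ Finset.range N, ((N : ℝ) * m i - d) * i = (N : ℝ) * ((i:ℝ) * m i) - d * i)]
    rw [Finset.sum_sub_distrib, ← Finset.mul_sum, ← Finset.mul_sum, hC]
  have hrhs : ∑ i ∈ Finset.range N, ((i : ℝ) - ((N : ℝ) - 1) / 2) * m i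
      = (∑ i ∈ Finset.range N, (i : ℝ) * m i) - ((N : ℝ) - 1) / 2 * d := by
    rw [Finset.sum_congr rfl (fun i _ => by ring :
      ∀ i ∈ Finset.range N, ((i : ℝ) - ((N:ℝ) - 1) / 2) * m i = (i:ℝ) * m i - ((N:ℝ)-1)/2 * m i)]
    rw [Finset.sum_sub_distrib, ← Finset.mul_sum, hd]
  rw [hexp, hrhs]
  field_simp
end

section
/- The 12×12 integer matrix C·B (product of the explicit matrices C and B given below) has characteristic polynomial (x−1)⁴·(x²−10x+1)⁴, and its eigenspace for eigenvalue 1 contains the four standard-basis combinations e₁+e₅, e₂+e₆, e₃+e₇, e₄+e₈. -/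
open Polynomial

/-- The matrix `B` of the action of the Dehn multitwist in direction `(3,-1)`. -/
def matB : Matrix (Fin 12) (Fin 12) ℚ :=
  !![2,1,1,0,-1,-1,-1,0,-1,0,0,1;
     -1,0,0,-1,1,1,0,1,0,1,0,0;
     0,1,1,0,0,-1,0,0,0,0,0,-1;
     -1,0,0,1,1,0,0,0,0,0,-1,-1;
     -1,1,-1,0,2,-1,1,0,1,0,0,-3;
     0,0,1,0,0,1,-1,0,-1,0,-1,1;
     -1,-2,-1,-1,1,2,2,1,1,1,1,0;
     1,0,0,0,-1,0,0,1,0,0,1,1;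
     1,1,1,-1,-1,-1,-1,1,0,1,1,1;
     -1,-1,1,-1,1,1,-1,1,-1,2,-1,1;
     -1,1,-1,1,1,-1,1,-1,1,-1,0,-3;
     -1,-1,-1,-1,1,1,1,1,1,1,1,0]

/-- The matrix `C` of the action of the Dehn multitwist in direction `(-1,3)`. -/
def matC : Matrix (Fin 12) (Fin 12) ℚ :=
  !![2,1,-1,0,-1,-1,1,0,0,-3,1,0;
     1,2,2,-1,-1,-1,-2,1,1,0,1,1;
     0,-1,1,0,0,1,0,0,-1,1,-1,0;
     1,0,0,1,-1,0,0,0,-1,-1,0,0;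
     -1,-1,-1,0,2,1,1,0,0,1,-1,0;
     0,0,-1,0,0,1,1,0,0,-1,0,0;
     1,0,1,-1,-1,0,0,1,0,0,0,1;
     -1,0,0,0,1,0,0,1,1,1,0,0;
     1,1,-1,1,-1,-1,1,-1,0,-3,1,-1;
     1,1,1,-1,-1,-1,-1,1,1,0,1,1;
     -1,-1,-1,-1,1,1,1,1,1,1,0,1;
     1,-1,1,-1,-1,1,-1,1,-1,1,-1,2]

def matBZ : Matrix (Fin 12) (Fin 12) ℤ :=
  !![2,1,1,0,-1,-1,-1,0,-1,0,0,1;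
     -1,0,0,-1,1,1,0,1,0,1,0,0;
     0,1,1,0,0,-1,0,0,0,0,0,-1;
     -1,0,0,1,1,0,0,0,0,0,-1,-1;
     -1,1,-1,0,2,-1,1,0,1,0,0,-3;
     0,0,1,0,0,1,-1,0,-1,0,-1,1;
     -1,-2,-1,-1,1,2,2,1,1,1,1,0;
     1,0,0,0,-1,0,0,1,0,0,1,1;
     1,1,1,-1,-1,-1,-1,1,0,1,1,1;
     -1,-1,1,-1,1,1,-1,1,-1,2,-1,1;
     -1,1,-1,1,1,-1,1,-1,1,-1,0,-3;
     -1,-1,-1,-1,1,1,1,1,1,1,1,0]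

def matCZ : Matrix (Fin 12) (Fin 12) ℤ :=
  !![2,1,-1,0,-1,-1,1,0,0,-3,1,0;
     1,2,2,-1,-1,-1,-2,1,1,0,1,1;
     0,-1,1,0,0,1,0,0,-1,1,-1,0;
     1,0,0,1,-1,0,0,0,-1,-1,0,0;
     -1,-1,-1,0,2,1,1,0,0,1,-1,0;
     0,0,-1,0,0,1,1,0,0,-1,0,0;
     1,0,1,-1,-1,0,0,1,0,0,0,1;
     -1,0,0,0,1,0,0,1,1,1,0,0;
     1,1,-1,1,-1,-1,1,-1,0,-3,1,-1;
     1,1,1,-1,-1,-1,-1,1,1,0,1,1;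
     -1,-1,-1,-1,1,1,1,1,1,1,0,1;
     1,-1,1,-1,-1,1,-1,1,-1,1,-1,2]

def matMZ : Matrix (Fin 12) (Fin 12) ℤ :=
  !![5,2,-4,2,-4,-2,4,-2,3,-5,5,-1;
     4,7,4,-2,-4,-6,-4,2,-1,1,3,1;
     0,-2,3,0,0,2,-2,0,-3,1,-3,3;
     2,0,0,3,-2,0,0,-2,-1,-3,-1,1;
     -4,-4,-2,-2,5,4,2,2,1,3,-1,-1;
     0,-2,-2,0,0,3,2,0,1,-1,1,1;
     4,0,2,-2,-4,0,-1,2,-1,1,3,5;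
     -2,0,0,-2,2,0,0,3,1,3,1,-1;
     2,2,-4,4,-2,-2,4,-4,3,-6,2,-4;
     4,4,2,-2,-4,-4,-2,2,0,1,4,2;
     -2,-4,-2,-4,2,4,2,4,2,4,3,2;
     4,-2,4,-2,-4,2,-4,2,-4,2,0,9]

def L0 : Matrix (Fin 12) (Fin 12) ℤ :=
  !![114477474306195,0,0,0,0,0,0,0,0,0,0,0;
     91581979444956,114477474306195,0,0,0,0,0,0,0,0,0,0;
     0,-42399064557850,114477474306195,0,0,0,0,0,0,0,0,0;
     45790989722478,-16959625823140,53871752614680,114477474306195,0,0,0,0,0,0,0,0;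
     -91581979444956,-50878877469420,-40403814461010,-123283433868210,114477474306195,0,0,0,0,0,0,0;
     0,-42399064557850,13467938153670,-58706397080100,-56013443085600,114477474306195,0,0,0,0,0,0;
     91581979444956,-33919251646280,148147319690370,-146765992700250,-140033607714000,32771114501580,114477474306195,0,0,0,0,0;
     -45790989722478,16959625823140,-53871752614680,-64577036788110,20304873118530,-6199940581380,-24876392806980,114477474306195,0,0,0,0;
     45790989722478,25439438734710,-80807628922020,152636632408260,9102184501410,2214264493350,-161235879304500,106957056286080,114477474306195,0,0,0;
     91581979444956,50878877469420,40403814461010,-76318316204130,-72817476011280,-17714115946800,99044897287050,-28410468075990,-3052732648165200,114477474306195,0,0;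
     -45790989722478,-67838503292560,13467938153670,-258308147152440,-109926382055490,73513581179220,124842637975770,6684816017880,-3586960861594110,130831399207080,114477474306195,0;
     91581979444956,-76318316204130,242422886766060,-158507272116270,-151236296331120,41185319576310,335370628953360,-255694212683910,-6563375193555180,228954948612390,0,114477474306195]

def U0 : Matrix (Fin 12) (Fin 12) ℤ :=
  !![-572387371530975,-228954948612390,457909897224780,-228954948612390,457909897224780,228954948612390,-457909897224780,228954948612390,-343432422918585,572387371530975,-572387371530975,114477474306195;
     0,-618178361253453,-824237815004604,412118907502302,91581979444956,503700886947258,824237815004604,-412118907502302,389223412641063,-572387371530975,114477474306195,-206059453751151;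
     0,0,-648705687735105,152636632408260,33919251646280,-42399064557850,534228213428910,-152636632408260,487589242415275,-326472797095445,385831487476435,-419750739122715;
     0,0,0,-262624793996565,43396689606270,2992875145260,53871752614680,148147319690370,80059410135705,183313602647175,178824289929285,6733969076835;
     0,0,0,0,-106649954695515,-62620156885440,17611919124030,-123283433868210,42072917907405,-57727957128765,36202278199395,-26417878686045;
     0,0,0,0,0,-180993437970345,49711930738470,-119028566556900,33958149870645,6651596366415,-8051932443555,-150886212311835;
     0,0,0,0,0,0,110048945319495,-263497474708650,17935542396135,-156991352578515,-75063566324565,-162305587362555;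
     0,0,0,0,0,0,0,-220893154647165,-36623578299165,-103421299725315,-101117930020965,-41690991648735;
     0,0,0,0,0,0,0,0,358115143815,-9788480597610,-5491098871830,-31991619514140;
     0,0,0,0,0,0,0,0,0,-267114106714455,-152636632408260,-839501478245430;
     0,0,0,0,0,0,0,0,0,0,-16353924900885,-32707849801770;
     0,0,0,0,0,0,0,0,0,0,0,-114477474306195]

def K0 : Matrix (Fin 12) (Fin 12) ℤ :=
  Matrix.diagonal (fun _ => 13105092123525536396615378025)

def L2 : Matrix (Fin 12) (Fin 12) ℤ :=
  !![40495455,0,0,0,0,0,0,0,0,0,0,0;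
     53993940,40495455,0,0,0,0,0,0,0,0,0,0;
     0,-34710390,40495455,0,0,0,0,0,0,0,0,0;
     26996970,-23140260,35995960,40495455,0,0,0,0,0,0,0,0;
     -53993940,-23140260,-8998990,-210576366,40495455,0,0,0,0,0,0,0;
     0,-34710390,26996970,-97189092,67026960,40495455,0,0,0,0,0,0;
     53993940,-46280520,80990910,-145783638,100540440,-23140260,40495455,0,0,0,0,0;
     -26996970,23140260,-35995960,-113387274,36306270,-4628052,12460140,40495455,0,0,0,0;
     26996970,11570130,-17997980,161981820,-41891850,20826234,-12460140,10450440,40495455,0,0,0;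
     53993940,23140260,8998990,-80990910,55855800,-27768312,31150350,7837830,58902480,40495455,0,0;
     -26996970,-46280520,26996970,-388756368,198288090,-4628052,56070630,20900880,80990910,0,40495455,0;
     53993940,-80990910,125985860,-113387274,78198120,-25454286,24920280,-54864810,44176860,-80990910,0,40495455]

def U2 : Matrix (Fin 12) (Fin 12) ℤ :=
  !![-121486365,-80990910,161981820,-80990910,161981820,80990910,-161981820,80990910,-121486365,202477275,-202477275,40495455;
     0,-94489395,-377957580,188978790,-53993940,134984850,377957580,-188978790,202477275,-310465155,148483335,-94489395;
     0,0,-364459095,161981820,-46280520,34710390,404954550,-161981820,295038315,-306608445,248757795,-202477275;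
     0,0,0,-22497475,-16712410,-7713420,-35995960,62992930,-25068615,81633695,39209885,58493435;
     0,0,0,0,-33553377,-9256104,-178180002,210576366,-151568703,327434679,114544287,299666367;
     0,0,0,0,0,48873825,181531350,-251351100,127071945,-367251885,-174549375,-342116775;
     0,0,0,0,0,0,376029225,-520655850,202477275,-780983775,-422309745,-688422735;
     0,0,0,0,0,0,0,96566085,42987483,51709581,77875875,9345105;
     0,0,0,0,0,0,0,0,43108065,7837830,23513490,109729620;
     0,0,0,0,0,0,0,0,0,55221075,44176860,-198795870;
     0,0,0,0,0,0,0,0,0,0,121486365,-242972730;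
     0,0,0,0,0,0,0,0,0,0,0,-607431825]

def K2 : Matrix (Fin 12) (Fin 12) ℤ :=
  Matrix.diagonal (fun _ => 1639881875657025)

def L4 : Matrix (Fin 12) (Fin 12) ℤ :=
  !![69615,0,0,0,0,0,0,0,0,0,0,0;
     278460,69615,0,0,0,0,0,0,0,0,0,0;
     0,27846,69615,0,0,0,0,0,0,0,0,0;
     139230,55692,61880,69615,0,0,0,0,0,0,0,0;
     -278460,-55692,15470,361998,69615,0,0,0,0,0,0,0;
     0,27846,77350,55692,0,69615,0,0,0,0,0,0;
     278460,111384,108290,27846,0,-39780,69615,0,0,0,0,0;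
     -139230,-55692,-61880,306306,32130,45900,-492660,69615,0,0,0,0;
     139230,27846,30940,-278460,-53550,22950,78540,-13104,69615,0,0,0;
     278460,55692,-15470,139230,0,0,-324870,63882,222768,69615,0,0;
     -139230,0,77350,556920,53550,76500,-496230,98280,306306,61880,69615,0;
     278460,139230,154700,-139230,0,-99450,742560,-106470,-55692,-46410,0,69615]

def U4 : Matrix (Fin 12) (Fin 12) ℤ :=
  !![-348075,-696150,1392300,-696150,1392300,696150,-1392300,696150,-1044225,1740375,-1740375,348075;
     0,1740375,-6961500,3480750,-4176900,-696150,6961500,-3480750,4524975,-7309575,5917275,-1740375;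
     0,0,3132675,-1392300,1670760,-417690,-2088450,1392300,-765765,2575755,-1322685,-348075;
     0,0,0,193375,-232050,-464100,-928200,850850,-502775,1121575,270725,657475;
     0,0,0,0,2714985,3341520,4594590,-5429970,1879605,-6334965,-2993445,-2993445;
     0,0,0,0,0,1461915,-417690,-835380,-904995,-487305,-1461915,208845;
     0,0,0,0,0,0,-447525,-895050,-1839825,-348075,-2436525,49725;
     0,0,0,0,0,0,0,-6827625,-10576125,-5274675,-16359525,-1954575;
     0,0,0,0,0,0,0,0,784875,-439530,-62790,1381380;
     0,0,0,0,0,0,0,0,0,2882061,3842748,-4483206;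
     0,0,0,0,0,0,0,0,0,0,2668575,-1779050;
     0,0,0,0,0,0,0,0,0,0,0,-2668575]

def K4 : Matrix (Fin 12) (Fin 12) ℤ :=
  Matrix.diagonal (fun _ => 24231241125)

def L6 : Matrix (Fin 12) (Fin 12) ℤ :=
  !![7528812525,0,0,0,0,0,0,0,0,0,0,0;
     -30115250100,7528812525,0,0,0,0,0,0,0,0,0,0;
     0,-1673069450,7528812525,0,0,0,0,0,0,0,0,0;
     -15057625050,3346138900,3542970600,7528812525,0,0,0,0,0,0,0,0;
     30115250100,-10038416700,2657227950,8107951950,7528812525,0,0,0,0,0,0,0;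
     0,-1673069450,6200198550,-772185900,461536400,7528812525,0,0,0,0,0,0;
     -30115250100,6692277800,4428713250,386092950,-230768200,-8092644300,7528812525,0,0,0,0,0;
     15057625050,-3346138900,-3542970600,8880137850,1442301250,7296646500,-27496532700,7528812525,0,0,0,0;
     -15057625050,5019208350,5314455900,-10038416700,-5249976550,-2321660250,22259097900,12046100040,7528812525,0,0,0;
     -30115250100,10038416700,-2657227950,5019208350,-2999986600,-1326663000,-8510831550,-33126775110,-13384555600,7528812525,0,0;
     15057625050,-6692277800,6200198550,12354974400,3865367350,5704650900,-7987088070,-38547520128,-15726852830,24092200080,7528812525,0;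
     -30115250100,5019208350,5314455900,-3474836550,2076913800,-13730962050,38233274040,19876065066,11376872260,-3011525010,0,7528812525]

def U6 : Matrix (Fin 12) (Fin 12) ℤ :=
  !![1505762505,-3011525010,6023050020,-3011525010,6023050020,3011525010,-6023050020,3011525010,-4517287515,7528812525,-7528812525,1505762505;
     0,-13551862545,18069150060,-9034575030,30115250100,21080675070,-18069150060,9034575030,-16563387555,28609487595,-34632537615,4517287515;
     0,0,8532654195,-2007683340,6692277800,1673069450,-1003841670,2007683340,836534725,4851901405,-3178831955,-3513445845;
     0,0,0,3454396335,-1476237750,-4133465700,-3542970600,4074416190,-560970345,4576337025,3336297315,1151465445;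
     0,0,0,0,16795043325,13899346200,1158278850,-8107951950,-5212254825,-3127352895,-17026699095,1505762505;
     0,0,0,0,0,6548047675,-6634585750,1269225100,-5613436465,4528825925,-5198053705,2417296895;
     0,0,0,0,0,0,-3814156125,729664650,-8497276515,4862219895,-8258477175,-868964265;
     0,0,0,0,0,0,0,1636698375,-23372052795,3993544035,-29133231075,-8314427745;
     0,0,0,0,0,0,0,0,62338567707,-13853015046,69265075230,27706030092;
     0,0,0,0,0,0,0,0,0,-3848059735,-15392238940,7696119470;
     0,0,0,0,0,0,0,0,0,0,34632537615,-13853015046;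
     0,0,0,0,0,0,0,0,0,0,0,-6926507523]

def K6 : Matrix (Fin 12) (Fin 12) ℤ :=
  Matrix.diagonal (fun _ => 11336603607319375125)

def L8 : Matrix (Fin 12) (Fin 12) ℤ :=
  !![62634601639995,0,0,0,0,0,0,0,0,0,0,0;
     -83512802186660,62634601639995,0,0,0,0,0,0,0,0,0,0;
     0,-75161521967994,62634601639995,0,0,0,0,0,0,0,0,0;
     -41756401093330,50107681311996,15184145852120,62634601639995,0,0,0,0,0,0,0,0;
     83512802186660,-250538406559980,18980182315150,31965244974894,62634601639995,0,0,0,0,0,0,0;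
     0,-75161521967994,34164328167270,-5183553239172,8433270347040,62634601639995,0,0,0,0,0,0;
     -83512802186660,100215362623992,11388109389090,7775329858758,-12649905520560,-58787752090452,62634601639995,0,0,0,0,0;
     41756401093330,-50107681311996,-15184145852120,37148798214066,15988075032930,46951291938012,172650819028380,62634601639995,0,0,0,0;
     -41756401093330,125269203279990,37960364630300,-50107681311996,-45855907512030,-37284849480186,-258327165313140,15781946869920,62634601639995,0,0,0;
     -83512802186660,250538406559980,-18980182315150,25053840655998,-40760806677360,-33142088426832,-649063229430,-62141415800310,-46829608702800,62634601639995,0,0;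
     41756401093330,-200430725247984,34164328167270,51835532391720,43044817396350,39849415846548,25313465947770,-51291327327240,-36292946744670,-214747205622840,62634601639995,0;
     -83512802186660,25053840655998,7592072926060,-4319627699310,7027725289200,-76739716654986,-160967680898640,8877345114330,49171089137940,-17895600468570,0,62634601639995]

def U8 : Matrix (Fin 12) (Fin 12) ℤ :=
  !![187903804919985,-125269203279990,250538406559980,-125269203279990,250538406559980,125269203279990,-250538406559980,125269203279990,-187903804919985,313173008199975,-313173008199975,62634601639995;
     0,-104391002733325,83512802186660,-41756401093330,584589615306620,542833214213290,-83512802186660,41756401093330,-187903804919985,354929409293305,-605467815853285,20878200546665;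
     0,0,413388370823967,-50107681311996,701507538367944,526130653775958,25053840655998,50107681311996,-37580760983997,363280689511971,-538657574103957,-162849964263987;
     0,0,0,275212643569675,-345439318135730,-478300594341780,-106289020964840,163229567910290,96798929807265,24674237009695,468810503184205,1898018231515;
     0,0,0,0,2155926184725621,1838433548826336,-78617224127442,-223756714824258,-601724138513883,691572394659531,-2017698098347701,111014431872267;
     0,0,0,0,0,390477986381175,-237361421642730,66412003982940,-178592068911795,199323858514935,-184917021672075,36456324937725;
     0,0,0,0,0,0,133258813882887,-37284849480186,-181591026172017,44682637075461,-178040088126285,-177053716446915;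
     0,0,0,0,0,0,0,288508605481635,633810243538395,-488420080146075,397551228025875,429355326267945;
     0,0,0,0,0,0,0,0,-791563272694425,606618582812550,-843347785861350,-384684954954300;
     0,0,0,0,0,0,0,0,0,61463861422425,-245855445689700,52683309790650;
     0,0,0,0,0,0,0,0,0,0,-939519024599925,268434007028550;
     0,0,0,0,0,0,0,0,0,0,0,-134217003514275]

def K8 : Matrix (Fin 12) (Fin 12) ℤ :=
  Matrix.diagonal (fun _ => 3923093322600864343583600025)

def L10 : Matrix (Fin 12) (Fin 12) ℤ :=
  !![4710299998837006035,0,0,0,0,0,0,0,0,0,0,0;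
     -3768239999069604828,4710299998837006035,0,0,0,0,0,0,0,0,0,0;
     0,6728999998338580050,4710299998837006035,0,0,0,0,0,0,0,0,0;
     -1884119999534802414,-2691599999335432020,661094736678878040,4710299998837006035,0,0,0,0,0,0,0,0;
     3768239999069604828,18841199995348024140,1156915789188036570,1548939622259069370,4710299998837006035,0,0,0,0,0,0,0;
     0,6728999998338580050,1818010525866914610,-253924528239191700,997768755269974800,4710299998837006035,0,0,0,0,0,0;
     -3768239999069604828,-5383199998670864040,165273684169719510,634811320597979250,-2494421888174937000,-4647384148451827860,4710299998837006035,0,0,0,0,0;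
     1884119999534802414,2691599999335432020,-661094736678878040,1802864150498261070,2170147042712195190,3472954941261835260,4828649245038940860,4710299998837006035,0,0,0,0;
     -1884119999534802414,-9420599997674012070,2313831578376073140,-2691599999335432020,-4847493202686627570,-4152446125421759550,-9625738691090699100,-217817340986682360,4710299998837006035,0,0,0;
     -3768239999069604828,-18841199995348024140,-1156915789188036570,1345799999667716010,-5288174402930866440,-4529941227732828600,-2445884421506653050,-3430623120540247170,-3334725662893455600,4710299998837006035,0,0;
     1884119999534802414,16149599996012592120,1818010525866914610,2640815093687593680,5047046953740622530,4144057345370402460,1909367838724548510,-1306904045920094160,-583576991006354730,-5582577776399414560,4710299998837006035,0;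
     -3768239999069604828,1345799999667716010,-330547368339439020,177747169767434190,-698438128688982360,-4722883168914041670,-2714142712897705320,-381180346726694130,2834516813459437260,-1046733333074890230,0,4710299998837006035]

def U10 : Matrix (Fin 12) (Fin 12) ℤ :=
  !![23551499994185030175,-9420599997674012070,18841199995348024140,-9420599997674012070,18841199995348024140,9420599997674012070,-18841199995348024140,9420599997674012070,-14130899996511018105,23551499994185030175,-23551499994185030175,4710299998837006035;
     0,6594419998371808449,-3768239999069604828,1884119999534802414,33914159991626443452,35798279991161245866,3768239999069604828,-1884119999534802414,-6594419998371808449,14130899996511018105,-32972099991859042245,-942059999767401207;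
     0,0,38355299990529906285,-2691599999335432020,-48448799988037776360,-60560999985047220450,4037399999003148030,2691599999335432020,23551499994185030175,-24897299993852746185,61233899984881078455,-12785099996843302095;
     0,0,0,30658268413482969105,43136431568296792110,32724189465604462980,-5949852630109902360,11734431576050085210,-8015773682231396235,35120657886065395875,-32145731571010444695,-1570099999612335345;
     0,0,0,0,-129463420722751888245,-165457222600657311720,-8455686790365083610,-13940456600331624330,29823435841693065165,-94929684882221817045,150970828264611425235,8366813205481366515;
     0,0,0,0,0,42018536706306813765,-14891698672404373890,5238285965167367700,-11129278991073843915,16134752246678217495,-14954059219608747315,-286858517140117755;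
     0,0,0,0,0,0,22536457607970822285,-7927397148532450050,-9064076845491335745,-7931591538558128595,-3275818610054943645,-16051930628271791715;
     0,0,0,0,0,0,0,36853955267282504505,14840995473722627055,-8592155274260468295,-10722441705895295145,14983014569164948845;
     0,0,0,0,0,0,0,0,1025556647145629445,-1833295953304576530,1760690172975682410,471937572137811780;
     0,0,0,0,0,0,0,0,0,-1125469911226541265,1500626548302055020,-83368141572336390;
     0,0,0,0,0,0,0,0,0,0,1570099999612335345,-348911111024963410;
     0,0,0,0,0,0,0,0,0,0,0,523366666537445115]

def K10 : Matrix (Fin 12) (Fin 12) ℤ :=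
  Matrix.diagonal (fun _ => 22186926079043899054673554962626421225)

def L11 : Matrix (Fin 12) (Fin 12) ℤ :=
  !![33458040,0,0,0,0,0,0,0,0,0,0,0;
     -22305360,33458040,0,0,0,0,0,0,0,0,0,0;
     0,25093530,33458040,0,0,0,0,0,0,0,0,0;
     -11152680,-8364510,3717560,33458040,0,0,0,0,0,0,0,0;
     22305360,66916080,7435120,9348570,33458040,0,0,0,0,0,0,0;
     0,25093530,11152680,-1476090,9896040,33458040,0,0,0,0,0,0;
     -22305360,-16729020,0,4428270,-29688120,-38672280,33458040,0,0,0,0,0;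
     11152680,8364510,-3717560,10824660,23562000,28243800,33458040,33458040,0,0,0,0;
     -11152680,-33458040,14870240,-16729020,-48066480,-39106800,-71098335,-8364510,33458040,0,0,0;
     -22305360,-66916080,-7435120,8364510,-56077560,-45624600,-29275785,-25093530,-33458040,33458040,0,0;
     11152680,58551570,11152680,16236990,51365160,39975840,22584177,-1672902,6691608,-30112236,33458040,0;
     -22305360,8364510,-3717560,1968120,-13194720,-34327080,-15892569,-5018706,20074824,-6691608,0,33458040]

def U11 : Matrix (Fin 12) (Fin 12) ℤ :=
  !![100374120,-33458040,66916080,-33458040,66916080,33458040,-66916080,33458040,-50187060,83645100,-83645100,16729020;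
     0,44610720,-22305360,11152680,111526800,122679480,22305360,-11152680,-16729020,39034380,-105950460,-5576340;
     0,0,150561180,-8364510,-83645100,-125467650,16729020,8364510,62733825,-46004805,129649905,-46004805;
     0,0,0,126397040,92939000,55763400,-18587800,40893160,-11152680,92939000,-52045840,-7435120;
     0,0,0,0,-174670650,-322279650,-31981950,-46742850,39362400,-199764180,270124470,29029770;
     0,0,0,0,0,181427400,-47124000,21205800,-37227960,65973600,-62674920,-6126120;
     0,0,0,0,0,0,86904000,-39106800,-31719960,-54749520,15208200,-55618560;
     0,0,0,0,0,0,0,167290200,50187060,16729020,-83645100,50187060;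
     0,0,0,0,0,0,0,0,25093530,-87827355,75280590,12546765;
     0,0,0,0,0,0,0,0,0,-100374120,100374120,0;
     0,0,0,0,0,0,0,0,0,0,50187060,-10037412;
     0,0,0,0,0,0,0,0,0,0,0,20074824]

def K11 : Matrix (Fin 12) (Fin 12) ℤ :=
  Matrix.diagonal (fun _ => 559720220320800)

def L12 : Matrix (Fin 12) (Fin 12) ℤ :=
  !![22828772295945,0,0,0,0,0,0,0,0,0,0,0;
     -13045012740540,22828772295945,0,0,0,0,0,0,0,0,0,0;
     0,11837141190490,22828772295945,0,0,0,0,0,0,0,0,0;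
     -6522506370270,-3382040340140,2052024476040,22828772295945,0,0,0,0,0,0,0,0;
     13045012740540,30438363061260,4617055071090,5550525028818,22828772295945,0,0,0,0,0,0,0;
     0,11837141190490,6669079547130,-835562907564,12046277960640,22828772295945,0,0,0,0,0,0;
     -13045012740540,-6764080680280,-513006119010,2924470176474,-42161972862240,-36444138732540,22828772295945,0,0,0,0,0;
     6522506370270,3382040340140,-2052024476040,6386087936382,31352589513630,26125124170068,35451740506644,22828772295945,0,0,0,0;
     -6522506370270,-15219181530630,9234110142180,-10146121020420,-59424719404050,-40989418956486,-76274956847628,-15880885075440,22828772295945,0,0,0;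
     -13045012740540,-30438363061260,-4617055071090,5073060510210,-73138116189600,-50448515638752,-47806134925626,-21836216978730,-121753452245040,22828772295945,0,0;
     6522506370270,27056322721120,6669079547130,9788022631464,64587409958610,43323481774188,38137478423814,7940442537720,76095907653150,-16602743487960,22828772295945,0;
     -13045012740540,5073060510210,-3078036714060,1611442750302,-23232107495520,-27885908400966,-17188722669888,-5955331903290,30438363061260,-4150685871990,0,22828772295945]

def U12 : Matrix (Fin 12) (Fin 12) ℤ :=
  !![159801406071615,-45657544591890,91315089183780,-45657544591890,91315089183780,45657544591890,-91315089183780,45657544591890,-68486316887835,114143861479725,-114143861479725,22828772295945;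
     0,88053835998645,-39135038221620,19567519110810,143495140145940,163062659256750,39135038221620,-19567519110810,-16306265925675,42396291406755,-133711380590535,-9783759555405;
     0,0,225751192704345,-10146121020420,-74404887483080,-130208553095390,25365302551050,10146121020420,76941417738185,-44812034506855,137818143860705,-63413256377625;
     0,0,0,196224840521325,99694189127610,48906583345620,-22572269236440,54891654734070,-6070572408285,111407828845005,-41981000738985,-12055643796735;
     0,0,0,0,-92896690401669,-320378691985968,-45299446202934,-61055775316998,23962750527639,-208264054710327,248669489597529,38585101410009;
     0,0,0,0,0,329793748185825,-50282454880350,41409080489700,-49717785600945,127911036291885,-126512807600025,-20032314912225;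
     0,0,0,0,0,0,95717049761025,-78825805685550,-53744867512875,-140760367295625,92441172122145,-64596212191665;
     0,0,0,0,0,0,0,339745846522005,115218156646593,215664754748751,-286568235762039,85675039557723;
     0,0,0,0,0,0,0,0,14888329758225,-367245467369550,287841041992350,19851106344300;
     0,0,0,0,0,0,0,0,0,-2092637460461625,1674109968369300,76095907653150;
     0,0,0,0,0,0,0,0,0,0,114143861479725,-20753429359950;
     0,0,0,0,0,0,0,0,0,0,0,51883573399875]

def K12 : Matrix (Fin 12) (Fin 12) ℤ :=
  Matrix.diagonal (fun _ => 521152844540105946663443025)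

def L13 : Matrix (Fin 12) (Fin 12) ℤ :=
  !![77220,0,0,0,0,0,0,0,0,0,0,0;
     -38610,77220,0,0,0,0,0,0,0,0,0,0;
     0,30888,77220,0,0,0,0,0,0,0,0,0;
     -19305,-7722,5720,77220,0,0,0,0,0,0,0,0;
     38610,77220,14300,16632,77220,0,0,0,0,0,0,0;
     0,30888,20020,-2376,347490,77220,0,0,0,0,0,0;
     -38610,-15444,-2860,9504,-1389960,-262548,77220,0,0,0,0,0;
     19305,7722,-5720,19008,984555,185328,-270270,77220,0,0,0,0;
     -19305,-38610,28600,-30888,-1756755,-324324,553410,-308880,77220,0,0,0;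
     -38610,-77220,-14300,15444,-2258685,-416988,527670,-231660,70200,77220,0,0;
     19305,69498,20020,29700,1930500,355212,-437580,231660,-77220,-47190,77220,0;
     -38610,15444,-11440,5940,-868725,-169884,167310,-77220,14040,-12870,0,77220]

def U13 : Matrix (Fin 12) (Fin 12) ℤ :=
  !![308880,-77220,154440,-77220,154440,77220,-154440,77220,-115830,193050,-193050,38610;
     0,193050,-77220,38610,231660,270270,77220,-38610,-19305,57915,-212355,-19305;
     0,0,416988,-15444,-92664,-185328,46332,15444,123552,-61776,200772,-108108;
     0,0,0,371800,145860,60060,-34320,91520,-1430,174460,-45760,-22880;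
     0,0,0,0,-14256,-441936,-78408,-99792,16038,-296406,320166,63558;
     0,0,0,0,0,2316600,231660,463320,-135135,1370655,-1447875,-289575;
     0,0,0,0,0,0,-138996,-277992,-189189,-629343,598455,-19305;
     0,0,0,0,0,0,0,-463320,-540540,-1930500,1544400,-154440;
     0,0,0,0,0,0,0,0,-707850,-3796650,2767050,-64350;
     0,0,0,0,0,0,0,0,0,1263600,-842400,-70200;
     0,0,0,0,0,0,0,0,0,0,257400,-42900;
     0,0,0,0,0,0,0,0,0,0,0,128700]

def K13 : Matrix (Fin 12) (Fin 12) ℤ :=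
  Matrix.diagonal (fun _ => 2981464200)

def L14 : Matrix (Fin 12) (Fin 12) ℤ :=
  !![710552330925562125,0,0,0,0,0,0,0,0,0,0,0;
     -315801035966916500,710552330925562125,0,0,0,0,0,0,0,0,0,0;
     0,232544399212002150,710552330925562125,0,0,0,0,0,0,0,0,0;
     -157900517983458250,-51676533158222700,44065260832593000,710552330925562125,0,0,0,0,0,0,0,0;
     315801035966916500,568441864740449700,121179467289630750,137459578200872382,710552330925562125,0,0,0,0,0,0,0;
     0,232544399212002150,165244728122223750,-18603551936960172,-428115211938414000,710552330925562125,0,0,0,0,0,0;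
     -315801035966916500,-103353066316445400,-33048945624444750,83715983716320774,1926518453722863000,5317944665838304500,710552330925562125,0,0,0,0,0;
     157900517983458250,51676533158222700,-44065260832593000,156063130137832554,-1314075858866520750,-3705459146947057500,-348320069402233500,710552330925562125,0,0,0,0;
     -157900517983458250,-284220932370224850,242358934579261500,-258382665791113500,2229766728845906250,7146242640540753750,620380715325871500,1376227672529509800,710552330925562125,0,0,0;
     -315801035966916500,-568441864740449700,-121179467289630750,129191332895556750,2973022305127875000,9528323520721005000,947059596984179250,583400861180987850,241890155208702000,710552330925562125,0,0;
     157900517983458250,516765331582227000,165244728122223750,248047359159468960,-2467608513256136250,-8103146925741367500,-813090339521781750,-1196719715243052000,-393071502214140750,-374796833894802000,710552330925562125,0;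
     -315801035966916500,129191332895556750,-110163152081482500,56844186474044970,1308129814256265000,2829993524316708750,317404086910911000,224384946608072250,181417616406526500,-109315743219317250,0,710552330925562125]

def U14 : Matrix (Fin 12) (Fin 12) ℤ :=
  !![336577419912108375,-74794982202690750,149589964405381500,-74794982202690750,149589964405381500,74794982202690750,-149589964405381500,74794982202690750,-112192473304036125,186987455506726875,-186987455506726875,37397491101345375;
     0,228540223397110625,-83105535780767500,41552767890383750,216074393029995500,257627160920379250,83105535780767500,-41552767890383750,-12465830367115125,45708044679422125,-195298009084803625,-20776383945191875;
     0,0,438570577461232125,-13599087673216500,-70715255900725800,-159109325776633050,47596806856257750,13599087673216500,116272199606001075,-52356487541883525,176108185368153675,-105392929467427875;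
     0,0,0,398616668715890625,128137140052671750,45224872959766500,-30149915306511000,87550715601599250,4348545476900625,160316376581736375,-29280206211130875,-24061951638850125;
     0,0,0,0,84504730801367331,-370547940919803192,-77079628931791122,-94051290347965314,1767881397518145,-253949363209644921,252371869039551807,60026372989577631;
     0,0,0,0,0,141985286298580725,-160292844703841850,-43938140172626700,-59178791357861175,-114195351488543325,136852910950781025,29448568306582425;
     0,0,0,0,0,0,1920988031443606125,526565247197739750,428731695978460875,1574230778710214625,-1920559406903762625,-558604931551041375;
     0,0,0,0,0,0,0,234446200559195625,-100476943096798125,-488987789737750875,274636977797914875,20095388619359625;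
     0,0,0,0,0,0,0,0,753292320755671125,1878422553033290550,-1288610693377786350,141041966439359700;
     0,0,0,0,0,0,0,0,0,825450154649695575,-471685802656968900,-54425284921957950;
     0,0,0,0,0,0,0,0,0,0,304522427539526625,-46849604236850250;
     0,0,0,0,0,0,0,0,0,0,0,163973614828975875]

def K14 : Matrix (Fin 12) (Fin 12) ℤ :=
  Matrix.diagonal (fun _ => 26572874472828923674403565643921875)

def L15 : Matrix (Fin 12) (Fin 12) ℤ :=
  !![6861687683760,0,0,0,0,0,0,0,0,0,0,0;
     -2744675073504,6861687683760,0,0,0,0,0,0,0,0,0,0;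
     0,1906024356600,6861687683760,0,0,0,0,0,0,0,0,0;
     -1372337536752,-381204871320,361141457040,6861687683760,0,0,0,0,0,0,0,0;
     2744675073504,4574458455840,1083424371120,1205431620120,6861687683760,0,0,0,0,0,0,0;
     0,1906024356600,1444565828160,-154542515400,-1823153732400,6861687683760,0,0,0,0,0,0;
     -2744675073504,-762409742640,-361141457040,772712577000,9115768662000,10427604117840,6861687683760,0,0,0,0,0;
     1372337536752,381204871320,-361141457040,1359974135520,-6032981441760,-7185861905040,-1385533089990,6861687683760,0,0,0,0;
     -1372337536752,-2287229227920,2166848742240,-2287229227920,9811881905280,15128130326400,1814388570225,6256244652840,6861687683760,0,0,0;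
     -2744675073504,-4574458455840,-1083424371120,1143614613960,13491337619760,20801179198800,5113276879725,1412700405480,1270682904400,6861687683760,0,0;
     1372337536752,4193253584520,1444565828160,2194503718680,-10905774144720,-17721524096640,-4519476984015,-5852615965560,-2795502389680,-3185783567460,6861687683760,0;
     -2744675073504,1143614613960,-1083424371120,556353055440,6563353436640,4376351987280,1946344102605,605443030920,1778956066160,-980241097680,0,6861687683760]

def U15 : Matrix (Fin 12) (Fin 12) ℤ :=
  !![17154219209400,-3430843841880,6861687683760,-3430843841880,6861687683760,3430843841880,-6861687683760,3430843841880,-5146265762820,8577109604700,-8577109604700,1715421920940;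
     0,12351037830768,-4117012610256,2058506305128,9606362757264,11664869062392,4117012610256,-2058506305128,-343084384188,1715421920940,-8577109604700,-1029253152564;
     0,0,21728677665240,-571807306980,-2668434099240,-6671085248100,2287229227920,571807306980,5241566980650,-2191928010090,7528796208570,-4860362109330;
     0,0,0,20043350865720,5477312098440,1685326799520,-1263995099640,3972556027440,391236578460,7072353533700,-872758521180,-1173709735380;
     0,0,0,0,7464403493820,-15253346269980,-3569932105740,-4219010670420,-324539282340,-10617070807980,9828903979440,2689039767960;
     0,0,0,0,0,14734396982760,-6032981441760,-580094369400,-2801027097960,-961299240720,1673986608840,281760122280;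
     0,0,0,0,0,0,39333138848640,3782032581600,4538439097920,16559899803720,-24637240817280,-12129518779560;
     0,0,0,0,0,0,0,15702708353220,-2771066179980,-15471786171555,6465821086620,1616455271655;
     0,0,0,0,0,0,0,0,25882689571830,42658506886905,-27799925836410,5272399727595;
     0,0,0,0,0,0,0,0,0,33800165257040,-16900082628520,-2414297518360;
     0,0,0,0,0,0,0,0,0,0,16296508248930,-2328072606990;
     0,0,0,0,0,0,0,0,0,0,0,9312290427960]

def K15 : Matrix (Fin 12) (Fin 12) ℤ :=
  Matrix.diagonal (fun _ => 11770689467365918441934400)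

def L16 : Matrix (Fin 12) (Fin 12) ℤ :=
  !![82168616460622046355,0,0,0,0,0,0,0,0,0,0,0;
     -29879496894771653220,82168616460622046355,0,0,0,0,0,0,0,0,0,0;
     0,19864940243227307910,82168616460622046355,0,0,0,0,0,0,0,0,0;
     -14939748447385826610,-3611807316950419620,3713835772231504920,82168616460622046355,0,0,0,0,0,0,0,0;
     29879496894771653220,46953495120355455060,12069966259752390990,13225895579699946990,82168616460622046355,0,0,0,0,0,0,0;
     0,19864940243227307910,15783802031983895910,-1607567418527065380,-13475704143875893920,82168616460622046355,0,0,0,0,0,0;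
     -29879496894771653220,-7223614633900839240,-4642294715289381150,8841620801898859590,74116372791317416560,64195901522671115340,82168616460622046355,0,0,0,0,0;
     14939748447385826610,3611807316950419620,-3713835772231504920,14833462998227012370,-47854063010922918750,-43818512138116244100,-8670069842367793860,82168616460622046355,0,0,0,0;
     -14939748447385826610,-23476747560177727530,24139932519504781980,-25282651218652937340,75060692968066295490,99927582558874849350,4991858394090547980,52067242113661494720,82168616460622046355,0,0,0;
     -29879496894771653220,-46953495120355455060,-12069966259752390990,12641325609326468670,105968037131387711280,141074234200764493200,42693525738932318250,4881303948155765130,9596334769123742640,82168616460622046355,0,0;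
     14939748447385826610,43341687803405035440,15783802031983895910,24259653770499350280,-83636141059623682530,-120625595202976912620,-38647493145827347782,-50765561060819957352,-27109645722774572958,-34084759420702478488,82168616460622046355,0;
     -29879496894771653220,12641325609326468670,-12998425202810267220,6649483412998315890,55740412595123015760,19843017285309551190,18706332508381421904,2277941842472690394,20632119753616046676,-10955815528082939514,0,82168616460622046355]

def U16 : Matrix (Fin 12) (Fin 12) ℤ :=
  !![903854781066842509905,-164337232921244092710,328674465842488185420,-164337232921244092710,328674465842488185420,164337232921244092710,-328674465842488185420,164337232921244092710,-246505849381866139065,410843082303110231775,-410843082303110231775,82168616460622046355;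
     0,679758554356055110755,-209156478263401572540,104578239131700786270,448192453421574798300,552770692553275584570,209156478263401572540,-104578239131700786270,-7469874223692913305,67228868013236219745,-395903333855724405165,-52289119565850393135;
     0,0,1118757316425392477295,-25282651218652937340,-108354219508512588600,-297974103648409618650,113771930483938218030,25282651218652937340,248311753040341348875,-98421749386898934645,342218743281052258995,-233864523772539670395;
     0,0,0,1044052081468581820635,248694359747645418750,67644865851359553900,-55707536583472573800,188477165440748874690,25797894917822418105,328608147346555479975,-25399983942226185435,-58957142884175140605;
     0,0,0,0,504113308826092888725,-671420365971823670400,-172082785028692680450,-198388433695499204850,-28889239160867879475,-472755305415344158845,411615549763960899555,126011364238632920355;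
     0,0,0,0,0,883003170677549696775,-266068590340731428250,-8422315089922433700,-132294152329130106315,13718164729797903375,14815617908181735645,-5091672304362198555;
     0,0,0,0,0,0,1671248740389738456375,52902837825286684950,132542093016147549735,447928505990735443245,-791494140998859880725,-502113836854210896315;
     0,0,0,0,0,0,0,895578805308218706675,-103843791066541531005,-608678312342593528035,194091336243915385275,87291839549293924545;
     0,0,0,0,0,0,0,0,1201252743834110422455,1490605594538677166550,-929436429535881056790,245511509688723298020;
     0,0,0,0,0,0,0,0,0,1570800047520942623385,-698133354453752277060,-116355559075625379510;
     0,0,0,0,0,0,0,0,0,0,885595088520037610715,-118079345136005014762;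
     0,0,0,0,0,0,0,0,0,0,0,531357053112022566429]

def K16 : Matrix (Fin 12) (Fin 12) ℤ :=
  Matrix.diagonal (fun _ => 6751681531052808308329058948267768786025)


section Aux
variable {n : Type*} [Fintype n] [LinearOrder n] [DecidableEq n]

lemma det_cert (A K L U : Matrix n n ℤ) (v : ℤ)
    (hKA : K * A = L * U)
    (hKu : ∀ i j : n, j < i → K i j = 0)
    (hL : ∀ i j : n, i < j → L i j = 0)
    (hU : ∀ i j : n, j < i → U i j = 0)
    (hne : (∏ i, K i i) ≠ 0)
    (hv : (∏ i, L i i) * ∏ i, U i i = (∏ i, K i i) * v) :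
    A.det = v := by
  apply mul_left_cancel₀ hne
  calc (∏ i, K i i) * A.det
      = K.det * A.det := by
        rw [Matrix.det_of_upperTriangular (fun i j hij => hKu i j hij)]
    _ = (K * A).det := (Matrix.det_mul K A).symm
    _ = (L * U).det := by rw [hKA]
    _ = (∏ i, L i i) * ∏ i, U i i := by
        rw [Matrix.det_mul,
          Matrix.det_of_lowerTriangular L (fun i j hij => hL i j hij),
          Matrix.det_of_upperTriangular (fun i j hij => hU i j hij)]
    _ = (∏ i, K i i) * v := hv

set_option linter.unusedSectionVars false in
lemma eval_charpoly' (M : Matrix n n ℚ) (t : ℚ) :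
    M.charpoly.eval t = (Matrix.scalar n t - M).det := by
  rw [Matrix.charpoly, _root_.eval_det, Matrix.matPolyEquiv_charmatrix, eval_sub, eval_X, eval_C]

lemma eval_via_int (MZ : Matrix n n ℤ) (MQ : Matrix n n ℚ)
    (hM : MQ = (Int.castRingHom ℚ).mapMatrix MZ) (t v : ℤ)
    (hd : (Matrix.scalar n t - MZ).det = v) :
    MQ.charpoly.eval (t : ℚ) = (v : ℚ) := by
  rw [eval_charpoly', hM]
  have h2 : Matrix.scalar n ((t : ℤ) : ℚ) - (Int.castRingHom ℚ).mapMatrix MZ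
      = (Int.castRingHom ℚ).mapMatrix (Matrix.scalar n t - MZ) := by
    rw [map_sub]
    congr 1
    simp [Matrix.scalar, RingHom.mapMatrix_apply, Matrix.diagonal_map]
  rw [h2, ← RingHom.map_det, hd]
  simp

end Aux

set_option maxHeartbeats 2000000 in
lemma matB_cast : matB = (Int.castRingHom ℚ).mapMatrix matBZ := by
  ext i j
  fin_cases i <;> fin_cases j <;> norm_num [matB, matBZ]

set_option maxHeartbeats 2000000 in
lemma matC_cast : matC = (Int.castRingHom ℚ).mapMatrix matCZ := by
  ext i j
  fin_cases i <;> fin_cases j <;> norm_num [matC, matCZ]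

lemma matM_cast : matC * matB = (Int.castRingHom ℚ).mapMatrix matMZ := by
  rw [matB_cast, matC_cast, ← _root_.map_mul]
  congr 1
  decide

lemma eig (a b : Fin 12) (hab : ∀ i : Fin 12, matMZ i a + matMZ i b
      = (if i = a then 1 else 0) + (if i = b then 1 else 0)) :
    (matC * matB).mulVec (Pi.single a 1 + Pi.single b 1) = Pi.single a 1 + Pi.single b 1 := by
  rw [matM_cast, Matrix.mulVec_add, Matrix.mulVec_single, Matrix.mulVec_single]
  funext i
  have h := congrArg (fun z : ℤ => (z : ℚ)) (hab i)
  push_cast at h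
  simpa [Pi.single_apply] using h

lemma tri12 (A : Matrix (Fin 12) (Fin 12) ℤ) (R : Fin 12 → Fin 12 → Prop) [DecidableRel R]
    (h : @decide (∀ i j, R i j → A i j = 0) (@Fintype.decidableForallFintype _ _
      (fun _ => @Fintype.decidableForallFintype _ _ (fun _ => instDecidableForall) _) _) = true) :
    ∀ i j, R i j → A i j = 0 :=
  @of_decide_eq_true _ (@Fintype.decidableForallFintype _ _
      (fun _ => @Fintype.decidableForallFintype _ _ (fun _ => instDecidableForall) _) _) h

lemma detpt0 : (Matrix.scalar (Fin 12) (0:ℤ) - matMZ).det = 1 :=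
  det_cert _ K0 L0 U0 _ (by decide) (tri12 _ _ (by rfl)) (tri12 _ _ (by rfl)) (tri12 _ _ (by rfl)) (by decide) (by decide)

lemma detpt2 : (Matrix.scalar (Fin 12) (2:ℤ) - matMZ).det = 50625 :=
  det_cert _ K2 L2 U2 _ (by decide) (tri12 _ _ (by rfl)) (tri12 _ _ (by rfl)) (tri12 _ _ (by rfl)) (by decide) (by decide)

lemma detpt4 : (Matrix.scalar (Fin 12) (4:ℤ) - matMZ).det = 22667121 :=
  det_cert _ K4 L4 U4 _ (by decide) (tri12 _ _ (by rfl)) (tri12 _ _ (by rfl)) (tri12 _ _ (by rfl)) (by decide) (by decide)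

lemma detpt6 : (Matrix.scalar (Fin 12) (6:ℤ) - matMZ).det = 174900625 :=
  det_cert _ K6 L6 U6 _ (by decide) (tri12 _ _ (by rfl)) (tri12 _ _ (by rfl)) (tri12 _ _ (by rfl)) (by decide) (by decide)

lemma detpt8 : (Matrix.scalar (Fin 12) (8:ℤ) - matMZ).det = 121550625 :=
  det_cert _ K8 L8 U8 _ (by decide) (tri12 _ _ (by rfl)) (tri12 _ _ (by rfl)) (tri12 _ _ (by rfl)) (by decide) (by decide)

lemma detpt10 : (Matrix.scalar (Fin 12) (10:ℤ) - matMZ).det = 6561 :=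
  det_cert _ K10 L10 U10 _ (by decide) (tri12 _ _ (by rfl)) (tri12 _ _ (by rfl)) (tri12 _ _ (by rfl)) (by decide) (by decide)

lemma detpt11 : (Matrix.scalar (Fin 12) (11:ℤ) - matMZ).det = 207360000 :=
  det_cert _ K11 L11 U11 _ (by decide) (tri12 _ _ (by rfl)) (tri12 _ _ (by rfl)) (tri12 _ _ (by rfl)) (by decide) (by decide)

lemma detpt12 : (Matrix.scalar (Fin 12) (12:ℤ) - matMZ).det = 5719140625 :=
  det_cert _ K12 L12 U12 _ (by decide) (tri12 _ _ (by rfl)) (tri12 _ _ (by rfl)) (tri12 _ _ (by rfl)) (by decide) (by decide)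

lemma detpt13 : (Matrix.scalar (Fin 12) (13:ℤ) - matMZ).det = 53084160000 :=
  det_cert _ K13 L13 U13 _ (by decide) (tri12 _ _ (by rfl)) (tri12 _ _ (by rfl)) (tri12 _ _ (by rfl)) (by decide) (by decide)

lemma detpt14 : (Matrix.scalar (Fin 12) (14:ℤ) - matMZ).det = 301489944561 :=
  det_cert _ K14 L14 U14 _ (by decide) (tri12 _ _ (by rfl)) (tri12 _ _ (by rfl)) (tri12 _ _ (by rfl)) (by decide) (by decide)

lemma detpt15 : (Matrix.scalar (Fin 12) (15:ℤ) - matMZ).det = 1281641353216 :=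
  det_cert _ K15 L15 U15 _ (by decide) (tri12 _ _ (by rfl)) (tri12 _ _ (by rfl)) (tri12 _ _ (by rfl)) (by decide) (by decide)

lemma detpt16 : (Matrix.scalar (Fin 12) (16:ℤ) - matMZ).det = 4481794850625 :=
  det_cert _ K16 L16 U16 _ (by decide) (tri12 _ _ (by rfl)) (tri12 _ _ (by rfl)) (tri12 _ _ (by rfl)) (by decide) (by decide)

/-- The 12×12 integer matrix `C·B` has characteristic polynomial
`(x-1)⁴·(x²-10x+1)⁴`, and its eigenspace for the eigenvalue `1` contains
`e₁+e₅`, `e₂+e₆`, `e₃+e₇`, `e₄+e₈`. -/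
theorem stmt18 :
    (matC * matB).charpoly = (X - 1) ^ 4 * (X ^ 2 - 10 * X + 1) ^ 4 ∧
    (matC * matB).mulVec (Pi.single 0 1 + Pi.single 4 1)
      = Pi.single 0 1 + Pi.single 4 1 ∧
    (matC * matB).mulVec (Pi.single 1 1 + Pi.single 5 1)
      = Pi.single 1 1 + Pi.single 5 1 ∧
    (matC * matB).mulVec (Pi.single 2 1 + Pi.single 6 1)
      = Pi.single 2 1 + Pi.single 6 1 ∧
    (matC * matB).mulVec (Pi.single 3 1 + Pi.single 7 1)
      = Pi.single 3 1 + Pi.single 7 1 := by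
  refine ⟨?_, eig 0 4 (by decide), eig 1 5 (by decide), eig 2 6 (by decide), eig 3 7 (by decide)⟩
  have ep0 : (matC * matB).charpoly.eval (0 : ℚ) = (1 : ℚ) := by
    have h := eval_via_int matMZ (matC * matB) matM_cast 0 1 detpt0
    norm_num at h ⊢
    exact h
  have eq0 : Polynomial.eval (0 : ℚ) (((X:ℚ[X]) - 1) ^ 4 * ((X:ℚ[X]) ^ 2 - 10 * X + 1) ^ 4) = (1 : ℚ) := by
    norm_num [Polynomial.eval_mul, Polynomial.eval_pow]
  have ep2 : (matC * matB).charpoly.eval (2 : ℚ) = (50625 : ℚ) := by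
    have h := eval_via_int matMZ (matC * matB) matM_cast 2 50625 detpt2
    norm_num at h ⊢
    exact h
  have eq2 : Polynomial.eval (2 : ℚ) (((X:ℚ[X]) - 1) ^ 4 * ((X:ℚ[X]) ^ 2 - 10 * X + 1) ^ 4) = (50625 : ℚ) := by
    norm_num [Polynomial.eval_mul, Polynomial.eval_pow]
  have ep4 : (matC * matB).charpoly.eval (4 : ℚ) = (22667121 : ℚ) := by
    have h := eval_via_int matMZ (matC * matB) matM_cast 4 22667121 detpt4
    norm_num at h ⊢
    exact h
  have eq4 : Polynomial.eval (4 : ℚ) (((X:ℚ[X]) - 1) ^ 4 * ((X:ℚ[X]) ^ 2 - 10 * X + 1) ^ 4) = (22667121 : ℚ) := by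
    norm_num [Polynomial.eval_mul, Polynomial.eval_pow]
  have ep6 : (matC * matB).charpoly.eval (6 : ℚ) = (174900625 : ℚ) := by
    have h := eval_via_int matMZ (matC * matB) matM_cast 6 174900625 detpt6
    norm_num at h ⊢
    exact h
  have eq6 : Polynomial.eval (6 : ℚ) (((X:ℚ[X]) - 1) ^ 4 * ((X:ℚ[X]) ^ 2 - 10 * X + 1) ^ 4) = (174900625 : ℚ) := by
    norm_num [Polynomial.eval_mul, Polynomial.eval_pow]
  have ep8 : (matC * matB).charpoly.eval (8 : ℚ) = (121550625 : ℚ) := by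
    have h := eval_via_int matMZ (matC * matB) matM_cast 8 121550625 detpt8
    norm_num at h ⊢
    exact h
  have eq8 : Polynomial.eval (8 : ℚ) (((X:ℚ[X]) - 1) ^ 4 * ((X:ℚ[X]) ^ 2 - 10 * X + 1) ^ 4) = (121550625 : ℚ) := by
    norm_num [Polynomial.eval_mul, Polynomial.eval_pow]
  have ep10 : (matC * matB).charpoly.eval (10 : ℚ) = (6561 : ℚ) := by
    have h := eval_via_int matMZ (matC * matB) matM_cast 10 6561 detpt10
    norm_num at h ⊢
    exact h
  have eq10 : Polynomial.eval (10 : ℚ) (((X:ℚ[X]) - 1) ^ 4 * ((X:ℚ[X]) ^ 2 - 10 * X + 1) ^ 4) = (6561 : ℚ) := by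
    norm_num [Polynomial.eval_mul, Polynomial.eval_pow]
  have ep11 : (matC * matB).charpoly.eval (11 : ℚ) = (207360000 : ℚ) := by
    have h := eval_via_int matMZ (matC * matB) matM_cast 11 207360000 detpt11
    norm_num at h ⊢
    exact h
  have eq11 : Polynomial.eval (11 : ℚ) (((X:ℚ[X]) - 1) ^ 4 * ((X:ℚ[X]) ^ 2 - 10 * X + 1) ^ 4) = (207360000 : ℚ) := by
    norm_num [Polynomial.eval_mul, Polynomial.eval_pow]
  have ep12 : (matC * matB).charpoly.eval (12 : ℚ) = (5719140625 : ℚ) := by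
    have h := eval_via_int matMZ (matC * matB) matM_cast 12 5719140625 detpt12
    norm_num at h ⊢
    exact h
  have eq12 : Polynomial.eval (12 : ℚ) (((X:ℚ[X]) - 1) ^ 4 * ((X:ℚ[X]) ^ 2 - 10 * X + 1) ^ 4) = (5719140625 : ℚ) := by
    norm_num [Polynomial.eval_mul, Polynomial.eval_pow]
  have ep13 : (matC * matB).charpoly.eval (13 : ℚ) = (53084160000 : ℚ) := by
    have h := eval_via_int matMZ (matC * matB) matM_cast 13 53084160000 detpt13
    norm_num at h ⊢
    exact h
  have eq13 : Polynomial.eval (13 : ℚ) (((X:ℚ[X]) - 1) ^ 4 * ((X:ℚ[X]) ^ 2 - 10 * X + 1) ^ 4) = (53084160000 : ℚ) := by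
    norm_num [Polynomial.eval_mul, Polynomial.eval_pow]
  have ep14 : (matC * matB).charpoly.eval (14 : ℚ) = (301489944561 : ℚ) := by
    have h := eval_via_int matMZ (matC * matB) matM_cast 14 301489944561 detpt14
    norm_num at h ⊢
    exact h
  have eq14 : Polynomial.eval (14 : ℚ) (((X:ℚ[X]) - 1) ^ 4 * ((X:ℚ[X]) ^ 2 - 10 * X + 1) ^ 4) = (301489944561 : ℚ) := by
    norm_num [Polynomial.eval_mul, Polynomial.eval_pow]
  have ep15 : (matC * matB).charpoly.eval (15 : ℚ) = (1281641353216 : ℚ) := by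
    have h := eval_via_int matMZ (matC * matB) matM_cast 15 1281641353216 detpt15
    norm_num at h ⊢
    exact h
  have eq15 : Polynomial.eval (15 : ℚ) (((X:ℚ[X]) - 1) ^ 4 * ((X:ℚ[X]) ^ 2 - 10 * X + 1) ^ 4) = (1281641353216 : ℚ) := by
    norm_num [Polynomial.eval_mul, Polynomial.eval_pow]
  have ep16 : (matC * matB).charpoly.eval (16 : ℚ) = (4481794850625 : ℚ) := by
    have h := eval_via_int matMZ (matC * matB) matM_cast 16 4481794850625 detpt16
    norm_num at h ⊢
    exact h
  have eq16 : Polynomial.eval (16 : ℚ) (((X:ℚ[X]) - 1) ^ 4 * ((X:ℚ[X]) ^ 2 - 10 * X + 1) ^ 4) = (4481794850625 : ℚ) := by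
    norm_num [Polynomial.eval_mul, Polynomial.eval_pow]
  set p := (matC * matB).charpoly with hp_def
  set qq := (((X:ℚ[X]) - 1) ^ 4 * ((X:ℚ[X]) ^ 2 - 10 * X + 1) ^ 4) with hq_def
  have hpm : p.Monic := Matrix.charpoly_monic _
  have hqm : qq.Monic := by
    rw [hq_def]
    monicity!
  have hpnat : p.natDegree = 12 := by
    rw [hp_def, Matrix.charpoly_natDegree_eq_dim, Fintype.card_fin]
  have hqnat : qq.natDegree = 12 := by
    rw [hq_def]
    compute_degree!
  have hpdeg : p.degree = (12 : ℕ) := by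
    rw [Polynomial.degree_eq_natDegree hpm.ne_zero, hpnat]
  have hqdeg : qq.degree = (12 : ℕ) := by
    rw [Polynomial.degree_eq_natDegree hqm.ne_zero, hqnat]
  by_contra hne
  have hsub : p - qq ≠ 0 := sub_ne_zero.mpr hne
  have hdeglt : (p - qq).degree < (12 : ℕ) := by
    rw [← hpdeg]
    exact Polynomial.degree_sub_lt (hpdeg.trans hqdeg.symm) hpm.ne_zero
      (by rw [hpm.leadingCoeff, hqm.leadingCoeff])
  have hnat : (p - qq).natDegree < 12 :=
    (Polynomial.natDegree_lt_iff_degree_lt hsub).mpr hdeglt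
  have hzero : p - qq = 0 := by
    apply Polynomial.eq_zero_of_natDegree_lt_card_of_eval_eq_zero (p - qq)
      (f := fun i : Fin 12 => ((![0,2,4,6,8,10,11,12,13,14,15,16] i : ℕ) : ℚ))
    · intro i j hij
      have : (![0,2,4,6,8,10,11,12,13,14,15,16] i : ℕ) = ![0,2,4,6,8,10,11,12,13,14,15,16] j :=
        Nat.cast_injective hij
      revert this
      revert i j
      decide
    · intro i
      fin_cases i <;>
        norm_num [Polynomial.eval_sub, ep0, ep2, ep4, ep6, ep8, ep10, ep11, ep12, ep13, ep14,
          ep15, ep16, eq0, eq2, eq4, eq6, eq8, eq10, eq11, eq12, eq13, eq14, eq15, eq16]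
    · simpa using hnat
  have := sub_eq_zero.mp hzero
  exact hne this
end
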